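/- arXiv:2007.04213 — 3 statements merged into one kernel-verified Lean document; each statement's English description precedes it below -/
import Mathlib

section
/- Let X be a set with closure operator c : Set X → Set X (monotone, inflationary). Let p : ℕ → X be a 'path', i.e. p (n+1) ∈ c {p n} for all n, and let S, T ⊆ X. Suppose p is an escape route from S avoiding T, i.e.: (i) ∃ n, p n ∈ S; (ii) for every n with p n ∈ S there is m ≥ n with p m ∉ S; (iii) there is no n such that (∃ k ≤ n, p k ∈ S) ∧ (∃ m ≥ n, p m ∉ S) ∧ p n ∈ T. Suppose further W ⊆ S satisfies c(W) \ W ⊆ T. Then p⁻¹(W) = ∅. -/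
theorem escape_route_avoids_until_approximant {X : Type*}
    (c : Set X → Set X) (hmono : Monotone c) (hinfl : ∀ A : Set X, A ⊆ c A)
    (p : ℕ → X) (hpath : ∀ n, p (n + 1) ∈ c {p n})
    (S T : Set X)
    (h1 : ∃ n, p n ∈ S)
    (h2 : ∀ n, p n ∈ S → ∃ m, n ≤ m ∧ p m ∉ S)
    (h3 : ¬ ∃ n, (∃ k ≤ n, p k ∈ S) ∧ (∃ m, n ≤ m ∧ p m ∉ S) ∧ p n ∈ T)
    (W : Set X) (hWS : W ⊆ S) (hWT : c W \ W ⊆ T) :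
    p ⁻¹' W = ∅ := by
  rw [Set.eq_empty_iff_forall_notMem]
  intro n hn
  have hnW : p n ∈ W := hn
  have hnS : p n ∈ S := hWS hnW
  obtain ⟨m, hnm, hmS⟩ := h2 n hnS
  have hex : ∃ j, p (n + j) ∉ W := ⟨m - n, by rw [Nat.add_sub_cancel' hnm]; exact fun h => hmS (hWS h)⟩
  classical
  set j := Nat.find hex with hjdef
  have hj : p (n + j) ∉ W := Nat.find_spec hex
  have hj0 : j ≠ 0 := by
    intro h0
    apply hj
    rw [h0]
    simpa using hnW
  obtain ⟨i, hi⟩ := Nat.exists_eq_succ_of_ne_zero hj0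
  have hiW : p (n + i) ∈ W := by
    by_contra hc
    exact Nat.find_min hex (by omega : i < j) hc
  have hcW : p (n + j) ∈ c W := by
    have : p (n + i + 1) ∈ c {p (n + i)} := hpath (n + i)
    have h' : c {p (n + i)} ⊆ c W := hmono (Set.singleton_subset_iff.mpr hiW)
    have := h' this
    rwa [show n + j = n + i + 1 by omega]
  have hT : p (n + j) ∈ T := hWT ⟨hcW, hj⟩
  apply h3
  refine ⟨n + j, ⟨n, by omega, hnS⟩, ?_, hT⟩
  by_cases hS : p (n + j) ∈ S
  · obtain ⟨m', hm', hm'S⟩ := h2 (n + j) hS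
    exact ⟨m', hm', hm'S⟩
  · exact ⟨n + j, le_rfl, hS⟩
end

section
/- Let X be a set with a monotone inflationary closure c : Set X → Set X, ℕ with the successor closure n(A) = {k+1 | k ∈ A}, S, T ⊆ X, and p : ℕ → X with p(k+1) ∈ c({p k}) for all k. If W ⊆ S with c(W) \ W ⊆ T, (∃ n, p n ∈ S), every n with p n ∈ S admits m ≥ n with p m ∉ S, and no n with p n ∈ T lies between an index in S and a later index outside S, then for every x ∈ W there is no n with p n = x; consequently x ∈ ⋃{W ⊆ S | c(W)\W ⊆ T} implies x ∉ range p, i.e. the until set S 𝔘 T is contained in the surrounded set Sur(S,T) := S ∩ ⋂_{p escape route} (range p)ᶜ. -/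
theorem until_subset_surrounded {X : Type*}
    (c : Set X → Set X) (hmono : Monotone c) (hinfl : ∀ A : Set X, A ⊆ c A)
    (S T : Set X) (p : ℕ → X) (hpath : ∀ k, p (k + 1) ∈ c {p k})
    (h1 : ∃ n, p n ∈ S)
    (h2 : ∀ n, p n ∈ S → ∃ m, n ≤ m ∧ p m ∉ S)
    (h3 : ¬ ∃ n, (∃ k ≤ n, p k ∈ S) ∧ (∃ m, n ≤ m ∧ p m ∉ S) ∧ p n ∈ T) :
    (∀ W : Set X, W ⊆ S → c W \ W ⊆ T → ∀ x ∈ W, ¬ ∃ n, p n = x) ∧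
    (∀ x ∈ ⋃₀ {W : Set X | W ⊆ S ∧ c W \ W ⊆ T}, x ∉ Set.range p) := by
  have main : ∀ W : Set X, W ⊆ S → c W \ W ⊆ T → ∀ x ∈ W, ¬ ∃ n, p n = x := by
    intro W hWS hcW x hxW ⟨n, hpn⟩
    have hnW : p n ∈ W := hpn ▸ hxW
    obtain ⟨m, hnm, hmS⟩ := h2 n (hWS hnW)
    have hmW : p m ∉ W := fun h => hmS (hWS h)
    have hex : ∃ j, p j ∉ W ∧ n < j :=
      ⟨m, hmW, lt_of_le_of_ne hnm (fun h => hmW (h ▸ hnW))⟩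
    classical
    set j := Nat.find hex with hj
    obtain ⟨hjW, hnj⟩ := Nat.find_spec hex
    have hj1 : p (j - 1) ∈ W := by
      rcases eq_or_lt_of_le (Nat.le_sub_one_of_lt hnj) with h | h
      · exact h ▸ hnW
      · by_contra hc
        exact Nat.find_min hex (Nat.sub_lt (Nat.zero_lt_of_lt hnj) one_pos) ⟨hc, h⟩
    have hjc : p j ∈ c W := by
      have : p ((j - 1) + 1) ∈ c {p (j - 1)} := hpath (j - 1)
      rw [Nat.sub_add_cancel (Nat.zero_lt_of_lt hnj)] at this
      exact hmono (Set.singleton_subset_iff.mpr hj1) this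
    have hjT : p j ∈ T := hcW ⟨hjc, hjW⟩
    apply h3
    refine ⟨j, ⟨n, hnj.le, hWS hnW⟩, ?_, hjT⟩
    by_cases hjS : p j ∈ S
    · exact h2 j hjS
    · exact ⟨j, le_rfl, hjS⟩
  refine ⟨main, ?_⟩
  rintro x ⟨W, ⟨hWS, hcW⟩, hxW⟩ ⟨n, hpn⟩
  exact main W hWS hcW x hxW ⟨n, hpn⟩
end

section
/- Let f : A → B be a map of sets with fuzzy structures α : A → [0,1], β : B → [0,1] such that α x ≤ β (f x) for all x. For ξ : A → [0,1] with ξ ≤ α, define ∃_f(ξ) : B → [0,1] by ∃_f(ξ)(y) = ⨆_{x ∈ f⁻¹{y}} ξ x, and for ζ ≤ β define f*(ζ)(x) = min (α x) (ζ (f x)). Then ∃_f(ξ) ≤ β, f*(ζ) ≤ α, and the adjunction holds: ∃_f(ξ) ≤ ζ if and only if ξ ≤ f*(ζ). Moreover Frobenius reciprocity holds: ∃_f(f*(ζ) ⊓ ξ) = ζ ⊓ ∃_f(ξ) pointwise. -/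
/-- Existential image of a fuzzy subset along a function (values in [0,1] ⊆ ℝ,
with the supremum over an empty fiber equal to 0). -/
noncomputable def fuzzyExists {A B : Type*} (f : A → B) (ξ : A → ℝ) : B → ℝ :=
  fun y => sSup (ξ '' (f ⁻¹' {y}))

theorem fuzzy_existential_adjunction_frobenius {A B : Type*}
    (f : A → B) (α : A → ℝ) (β : B → ℝ)
    (hα : ∀ x, α x ∈ Set.Icc (0 : ℝ) 1) (hβ : ∀ y, β y ∈ Set.Icc (0 : ℝ) 1)
    (hαβ : ∀ x, α x ≤ β (f x))
    (ξ : A → ℝ) (hξ : ∀ x, ξ x ∈ Set.Icc (0 : ℝ) 1) (hξα : ξ ≤ α)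
    (ζ : B → ℝ) (hζ : ∀ y, ζ y ∈ Set.Icc (0 : ℝ) 1) (hζβ : ζ ≤ β) :
    (∀ y, fuzzyExists f ξ y ≤ β y) ∧
    (∀ x, min (α x) (ζ (f x)) ≤ α x) ∧
    ((∀ y, fuzzyExists f ξ y ≤ ζ y) ↔ ∀ x, ξ x ≤ min (α x) (ζ (f x))) ∧
    (∀ y, fuzzyExists f (fun x => min (min (α x) (ζ (f x))) (ξ x)) y =
      min (ζ y) (fuzzyExists f ξ y)) := by
  have hbdd : ∀ (η : A → ℝ), (∀ x, η x ≤ 1) → ∀ y : B,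
      BddAbove (η '' (f ⁻¹' {y})) := by
    intro η hη y
    exact ⟨1, by rintro _ ⟨x, -, rfl⟩; exact hη x⟩
  have hle : ∀ (η : A → ℝ), (∀ x, η x ≤ 1) → ∀ y : B, ∀ c : ℝ, 0 ≤ c →
      (∀ x, f x = y → η x ≤ c) → fuzzyExists f η y ≤ c := by
    intro η hη y c hc h
    rcases Set.eq_empty_or_nonempty (η '' (f ⁻¹' {y})) with he | hne
    · simp [fuzzyExists, he, Real.sSup_empty, hc]
    · exact csSup_le hne (by rintro _ ⟨x, hx, rfl⟩; exact h x hx)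
  refine ⟨?_, ?_, ?_, ?_⟩
  · intro y
    exact hle ξ (fun x => (hξ x).2) y (β y) (hβ y).1
      (fun x hx => hx ▸ le_trans (le_trans (hξα x) (hαβ x)) le_rfl)
  · intro x; exact min_le_left _ _
  · constructor
    · intro h x
      refine le_min (hξα x) (le_trans ?_ (h (f x)))
      exact le_csSup (hbdd ξ (fun x => (hξ x).2) (f x)) ⟨x, rfl, rfl⟩
    · intro h y
      exact hle ξ (fun x => (hξ x).2) y (ζ y) (hζ y).1
        (fun x hx => hx ▸ le_trans (h x) (min_le_right _ _))
  · intro y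
    have hkey : ∀ x, f x = y →
        min (min (α x) (ζ (f x))) (ξ x) = min (ζ y) (ξ x) := by
      intro x hx
      subst hx
      rw [min_comm (α x) (ζ (f x)), min_assoc, min_eq_right (hξα x)]
    rcases Set.eq_empty_or_nonempty (f ⁻¹' {y}) with he | hne
    · simp [fuzzyExists, he, Real.sSup_empty, min_eq_right (hζ y).1]
    · have himg : (fun x => min (min (α x) (ζ (f x))) (ξ x)) '' (f ⁻¹' {y})
          = (fun r => min (ζ y) r) '' (ξ '' (f ⁻¹' {y})) := by
        rw [← Set.image_comp]
        exact Set.image_congr (fun x hx => hkey x hx)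
      have hmono : Monotone (fun r : ℝ => min (ζ y) r) :=
        fun a b hab => min_le_min le_rfl hab
      have hcont : ContinuousAt (fun r : ℝ => min (ζ y) r)
          (sSup (ξ '' (f ⁻¹' {y}))) :=
        (continuous_const.min continuous_id).continuousAt
      have := hmono.map_csSup_of_continuousAt hcont
        (hne.image ξ) (hbdd ξ (fun x => (hξ x).2) y)
      simp only [fuzzyExists, himg]
      exact this.symm
end
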